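/- Let A be an irreducible nonnegative d × d matrix and x ∈ [0,∞)^d a nonzero vector with A x ≤ ρ(A) x entrywise. Then A x = ρ(A) x and every entry of x is strictly positive. -/

import Mathlib

open scoped Classical

def IsPathFun {V E : Type} (r s : E → V) (n : ℕ) (f : Fin n → E) : Prop :=
  ∀ i : Fin n, ∀ h : i.1 + 1 < n, s (f i) = r (f ⟨i.1 + 1, h⟩)

def Reach {V E : Type} (r s : E → V) : V → V → Prop :=
  Relation.ReflTransGen (fun a b => ∃ e, r e = a ∧ s e = b)

def Hered {V E : Type} (r s : E → V) (H : Set V) : Prop :=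
  ∀ v ∈ H, ∀ w, Reach r s v w → w ∈ H

noncomputable def specRad {ι : Type} [Fintype ι] [DecidableEq ι] (A : Matrix ι ι ℝ) : ℝ :=
  sSup (insert 0 ((fun z : ℂ => ‖z‖) '' spectrum ℂ (A.map Complex.ofReal)))

/-- Irreducibility of a nonnegative matrix: for all i, j some power has positive (i,j) entry. -/
def MatIrred {ι : Type} [Fintype ι] [DecidableEq ι] (B : Matrix ι ι ℝ) : Prop :=
  ∀ i j, ∃ n : ℕ, 0 < (B ^ n) i j

/-- Any complex eigenvalue of a nonnegative matrix `A` has modulus at most `c`,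
provided `A y ≤ c y` for some strictly positive vector `y`. -/
lemma eig_bound {d : ℕ} (A : Matrix (Fin d) (Fin d) ℝ) (hA : ∀ i j, 0 ≤ A i j)
    (y : Fin d → ℝ) (hy : ∀ i, 0 < y i) (c : ℝ)
    (hc : ∀ i, A.mulVec y i ≤ c * y i)
    (z : ℂ) (hz : z ∈ spectrum ℂ (A.map Complex.ofReal)) :
    ‖z‖ ≤ c := by
  set M : Matrix (Fin d) (Fin d) ℂ := A.map Complex.ofReal with hM
  -- turn spectrum membership into an eigenvector
  have hz' : z ∈ spectrum ℂ (Matrix.toLinAlgEquiv' M) := by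
    rwa [AlgEquiv.spectrum_eq]
  have hev : Module.End.HasEigenvalue (Matrix.toLinAlgEquiv' M) z :=
    Module.End.hasEigenvalue_iff_mem_spectrum.mpr hz'
  obtain ⟨v, hv⟩ := hev.exists_hasEigenvector
  have hvec : M.mulVec v = z • v := by
    have := hv.apply_eq_smul
    rwa [Matrix.toLinAlgEquiv'_apply] at this
  have hv0 : v ≠ 0 := hv.2
  -- choose the index maximizing |v j| / y j
  obtain ⟨k, hk⟩ : ∃ k, v k ≠ 0 := by
    by_contra h; push_neg at h; exact hv0 (funext h)
  obtain ⟨i, -, hi⟩ := Finset.exists_max_image (Finset.univ : Finset (Fin d))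
    (fun j => ‖v j‖ / y j) ⟨k, Finset.mem_univ k⟩
  set t : ℝ := ‖v i‖ / y i with ht
  have htpos : 0 < t := by
    have h1 : ‖v k‖ / y k ≤ t := hi k (Finset.mem_univ k)
    have h2 : 0 < ‖v k‖ / y k :=
      div_pos (by simpa using hk) (hy k)
    linarith
  have hbound : ∀ j, ‖v j‖ ≤ t * y j := by
    intro j
    have := hi j (Finset.mem_univ j)
    have hyj := hy j
    rw [div_le_div_iff₀ (hyj) (hy i)] at this
    calc ‖v j‖ = ‖v j‖ / y j * y j := by field_simp
    _ ≤ t * y j := by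
        apply mul_le_mul_of_nonneg_right (hi j (Finset.mem_univ j)) hyj.le
  have hieq : ‖v i‖ = t * y i := by
    rw [ht, div_mul_cancel₀ _ (hy i).ne']
  have hvi : 0 < ‖v i‖ := by
    rw [hieq]; exact mul_pos htpos (hy i)
  -- estimate |z| * |v i|
  have key : ‖z‖ * ‖v i‖ ≤ c * ‖v i‖ := by
    have h1 : ‖z‖ * ‖v i‖ = ‖M.mulVec v i‖ := by
      rw [hvec]; simp [Pi.smul_apply, smul_eq_mul, map_mul]
    rw [h1]
    have h2 : ‖M.mulVec v i‖ ≤ ∑ j, A i j * ‖v j‖ := by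
      rw [Matrix.mulVec, dotProduct]
      refine le_trans (norm_sum_le _ _) (Finset.sum_le_sum ?_)
      intro j _
      simp only [hM, Matrix.map_apply, map_mul, norm_mul, Complex.norm_real, Real.norm_eq_abs]
      exact mul_le_mul_of_nonneg_right (le_of_eq (abs_of_nonneg (hA i j)))
        (norm_nonneg _)
    refine h2.trans ?_
    have h3 : ∑ j, A i j * ‖v j‖ ≤ ∑ j, A i j * (t * y j) :=
      Finset.sum_le_sum fun j _ => mul_le_mul_of_nonneg_left (hbound j) (hA i j)
    refine h3.trans ?_
    have h4 : ∑ j, A i j * (t * y j) = t * A.mulVec y i := by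
      rw [Matrix.mulVec, dotProduct, Finset.mul_sum]; congr 1; ext j; ring
    rw [h4, hieq]
    calc t * A.mulVec y i ≤ t * (c * y i) :=
          mul_le_mul_of_nonneg_left (hc i) htpos.le
    _ = c * (t * y i) := by ring
  exact le_of_mul_le_mul_right key hvi

lemma specRad_nonneg {d : ℕ} (A : Matrix (Fin d) (Fin d) ℝ) (hA : ∀ i j, 0 ≤ A i j)
    (hd : 0 < d) : 0 ≤ specRad A := by
  have hy : ∀ i : Fin d, (0:ℝ) < (1 : Fin d → ℝ) i := fun i => one_pos
  set c : ℝ := (∑ i, ∑ j, A i j) + 1 with hcdef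
  have hc : ∀ i, A.mulVec (1 : Fin d → ℝ) i ≤ c * (1 : Fin d → ℝ) i := by
    intro i
    have h2 : ∑ j, A i j ≤ ∑ i, ∑ j, A i j :=
      Finset.single_le_sum (f := fun i => ∑ j, A i j)
        (fun i _ => Finset.sum_nonneg fun j _ => hA i j) (Finset.mem_univ i)
    simp only [Pi.one_apply, mul_one, Matrix.mulVec, dotProduct]
    rw [hcdef]
    linarith
  have hbdd : BddAbove (insert 0 ((fun z : ℂ => ‖z‖) ''
      spectrum ℂ (A.map Complex.ofReal))) := by
    refine ⟨c, ?_⟩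
    rintro r (rfl | ⟨z, hz, rfl⟩)
    · have := hc ⟨0, hd⟩
      have h0 : (0:ℝ) ≤ A.mulVec (1 : Fin d → ℝ) ⟨0, hd⟩ := by
        simp only [Matrix.mulVec, dotProduct]
        exact Finset.sum_nonneg fun j _ => mul_nonneg (hA _ j) zero_le_one
      simpa using le_trans h0 (by simpa using this)
    · exact eig_bound A hA 1 hy c hc z hz
  exact le_csSup hbdd (Set.mem_insert 0 _)

lemma specRad_le {d : ℕ} (A : Matrix (Fin d) (Fin d) ℝ) (hA : ∀ i j, 0 ≤ A i j)
    (y : Fin d → ℝ) (hy : ∀ i, 0 < y i) (c : ℝ) (hc0 : 0 ≤ c)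
    (hc : ∀ i, A.mulVec y i ≤ c * y i) : specRad A ≤ c := by
  apply Real.sSup_le
  · rintro r (rfl | ⟨z, hz, rfl⟩)
    · exact hc0
    · exact eig_bound A hA y hy c hc z hz
  · exact hc0

lemma pow_entry_nonneg {d : ℕ} (A : Matrix (Fin d) (Fin d) ℝ) (hA : ∀ i j, 0 ≤ A i j) :
    ∀ n i j, 0 ≤ (A ^ n) i j := by
  intro n
  induction n with
  | zero => intro i j; by_cases h : i = j <;> simp [Matrix.one_apply, h]
  | succ n ih =>
      intro i j
      rw [pow_succ, Matrix.mul_apply]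
      exact Finset.sum_nonneg fun k _ => mul_nonneg (ih i k) (hA k j)

theorem stmt9 {d : ℕ} (A : Matrix (Fin d) (Fin d) ℝ) (hA : ∀ i j, 0 ≤ A i j)
    (hirr : MatIrred A) (x : Fin d → ℝ) (hx : ∀ i, 0 ≤ x i) (hx0 : x ≠ 0)
    (hsub : ∀ i, A.mulVec x i ≤ specRad A * x i) :
    A.mulVec x = specRad A • x ∧ ∀ i, 0 < x i := by
  have hd : 0 < d := by
    rcases Nat.eq_zero_or_pos d with h | h
    · exfalso; apply hx0; funext i; exact absurd i.2 (by omega)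
    · exact h
  set ρ := specRad A with hρ
  have hρ0 : 0 ≤ ρ := specRad_nonneg A hA hd
  have hpow : ∀ n i j, 0 ≤ (A ^ n) i j := pow_entry_nonneg A hA
  -- powers remain subinvariant : (A^n) x ≤ ρ^n x
  have hsubpow : ∀ n i, (A ^ n).mulVec x i ≤ ρ ^ n * x i := by
    intro n
    induction n with
    | zero => intro i; simp [Matrix.mulVec, dotProduct, Matrix.one_apply,
        Finset.sum_ite_eq, Finset.mem_univ]
    | succ n ih =>
        intro i
        have hmul : (A ^ (n + 1)).mulVec x = A.mulVec ((A ^ n).mulVec x) := by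
          rw [pow_succ']
          rw [← Matrix.mulVec_mulVec]
        rw [hmul]
        have h1 : A.mulVec ((A ^ n).mulVec x) i ≤ A.mulVec (fun j => ρ ^ n * x j) i := by
          simp only [Matrix.mulVec, dotProduct]
          exact Finset.sum_le_sum fun j _ =>
            mul_le_mul_of_nonneg_left (ih j) (hA i j)
        refine h1.trans ?_
        have h2 : A.mulVec (fun j => ρ ^ n * x j) i = ρ ^ n * A.mulVec x i := by
          simp only [Matrix.mulVec, dotProduct, Finset.mul_sum]
          congr 1; ext j; ring
        rw [h2, pow_succ]
        calc ρ ^ n * A.mulVec x i ≤ ρ ^ n * (ρ * x i) :=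
              mul_le_mul_of_nonneg_left (hsub i) (pow_nonneg hρ0 n)
        _ = ρ ^ n * ρ * x i := by ring
  -- positivity of x
  obtain ⟨j0, hj0⟩ : ∃ j, 0 < x j := by
    by_contra h; push_neg at h
    exact hx0 (funext fun i => le_antisymm (h i) (hx i))
  have hxpos : ∀ i, 0 < x i := by
    intro i
    obtain ⟨n, hn⟩ := hirr i j0
    have h1 : (A ^ n) i j0 * x j0 ≤ (A ^ n).mulVec x i := by
      rw [Matrix.mulVec, dotProduct]
      exact Finset.single_le_sum (f := fun j => (A ^ n) i j * x j)
        (fun j _ => mul_nonneg (hpow n i j) (hx j)) (Finset.mem_univ j0)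
    have h2 : 0 < ρ ^ n * x i :=
      lt_of_lt_of_le (mul_pos hn hj0) (h1.trans (hsubpow n i))
    rcases (hx i).lt_or_eq with h | h
    · exact h
    · exfalso; rw [← h] at h2; simp at h2
  refine ⟨?_, hxpos⟩
  -- now show A x = ρ x
  by_contra hne
  obtain ⟨i0, hi0⟩ : ∃ i0, A.mulVec x i0 < ρ * x i0 := by
    by_contra h; push_neg at h
    exact hne (funext fun i => le_antisymm (hsub i) (h i))
  have hρpos : 0 < ρ := by
    have h0 : (0:ℝ) ≤ A.mulVec x i0 := by
      simp only [Matrix.mulVec, dotProduct]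
      exact Finset.sum_nonneg fun j _ => mul_nonneg (hA i0 j) (hx j)
    have h2 : 0 < ρ * x i0 := lt_of_le_of_lt h0 hi0
    nlinarith [hxpos i0]
  -- choose N dominating all the irreducibility exponents towards i0
  have hex : ∀ i : Fin d, ∃ n, 0 < (A ^ n) i i0 := fun i => hirr i i0
  set nf : Fin d → ℕ := fun i => Classical.choose (hex i) with hnf
  have hnfpos : ∀ i, 0 < (A ^ (nf i)) i i0 := fun i => Classical.choose_spec (hex i)
  obtain ⟨N, hN⟩ : ∃ N, ∀ i, nf i ≤ N :=
    ⟨Finset.univ.sup nf, fun i => Finset.le_sup (Finset.mem_univ i)⟩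
  -- P = sum of powers of A up to N
  set P : Matrix (Fin d) (Fin d) ℝ := ∑ k ∈ Finset.range (N + 1), A ^ k with hP
  have hPnn : ∀ i j, 0 ≤ P i j := by
    intro i j
    rw [hP]
    rw [Matrix.sum_apply]
    exact Finset.sum_nonneg fun k _ => hpow k i j
  have hPi0 : ∀ i, 0 < P i i0 := by
    intro i
    rw [hP, Matrix.sum_apply]
    refine lt_of_lt_of_le (hnfpos i) ?_
    exact Finset.single_le_sum (f := fun k => (A ^ k) i i0)
      (fun k _ => hpow k i i0) (Finset.mem_range.mpr (by have := hN i; omega))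
  have hcomm : A * P = P * A := by
    rw [hP, Finset.mul_sum, Finset.sum_mul]
    exact Finset.sum_congr rfl fun k _ => (Commute.pow_right (Commute.refl A) k).eq
  -- w = P x is strictly positive
  set w : Fin d → ℝ := P.mulVec x with hw
  have hwpos : ∀ i, 0 < w i := by
    intro i
    rw [hw, Matrix.mulVec, dotProduct]
    refine lt_of_lt_of_le (mul_pos (hPi0 i) (hxpos i0)) ?_
    exact Finset.single_le_sum (f := fun j => P i j * x j)
      (fun j _ => mul_nonneg (hPnn i j) (hx j)) (Finset.mem_univ i0)
  -- y = ρ x - A x ≥ 0, positive at i0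
  set y : Fin d → ℝ := fun i => ρ * x i - A.mulVec x i with hy
  have hynn : ∀ i, 0 ≤ y i := fun i => sub_nonneg.mpr (hsub i)
  have hyi0 : 0 < y i0 := sub_pos.mpr hi0
  -- A w = ρ w - P y, strictly below ρ w everywhere
  have hAw : ∀ i, A.mulVec w i = ρ * w i - P.mulVec y i := by
    intro i
    have h1 : A.mulVec w = (A * P).mulVec x := by
      rw [hw, Matrix.mulVec_mulVec]
    have h2 : (A * P).mulVec x = P.mulVec (A.mulVec x) := by
      rw [hcomm, ← Matrix.mulVec_mulVec]
    have h3 : A.mulVec x = fun j => ρ * x j - y j := by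
      funext j; rw [hy]; ring
    rw [h1, h2, h3]
    simp only [Matrix.mulVec, dotProduct, hw]
    rw [Finset.mul_sum, ← Finset.sum_sub_distrib]
    congr 1; ext j; ring
  have hPy : ∀ i, 0 < P.mulVec y i := by
    intro i
    rw [Matrix.mulVec, dotProduct]
    refine lt_of_lt_of_le (mul_pos (hPi0 i) hyi0) ?_
    exact Finset.single_le_sum (f := fun j => P i j * y j)
      (fun j _ => mul_nonneg (hPnn i j) (hynn j)) (Finset.mem_univ i0)
  have hstrict : ∀ i, A.mulVec w i < ρ * w i := by
    intro i; rw [hAw i]; linarith [hPy i]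
  -- define c as the max of (A w)_i / w_i, get ρ ≤ c < ρ
  obtain ⟨im, -, him⟩ := Finset.exists_max_image (Finset.univ : Finset (Fin d))
    (fun i => A.mulVec w i / w i) ⟨⟨0, hd⟩, Finset.mem_univ _⟩
  set c : ℝ := A.mulVec w im / w im with hcdef
  have hc0 : 0 ≤ c := by
    apply div_nonneg _ (hwpos im).le
    simp only [Matrix.mulVec, dotProduct]
    exact Finset.sum_nonneg fun j _ => mul_nonneg (hA im j) (hwpos j).le
  have hcρ : c < ρ := by
    rw [hcdef, div_lt_iff₀ (hwpos im)]
    calc A.mulVec w im < ρ * w im := hstrict im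
    _ = ρ * w im := rfl
  have hcle : ∀ i, A.mulVec w i ≤ c * w i := by
    intro i
    have := him i (Finset.mem_univ i)
    rw [div_le_iff₀ (hwpos i)] at this
    exact this
  have : ρ ≤ c := specRad_le A hA w hwpos c hc0 hcle
  linarith
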